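/- If v ∈ ℝ and u(x) = (1/(2π)) ∫_x^∞ K₀(|ξ|·√(1 + v²/4)) exp(-(v/2)ξ) dξ denotes the on-axis profile (y = 0), then there exist constants C > 0 and γ = √(1 + v²/4) + v/2 > 0 such that u(x) ~ C·e^{-γx}/√x as x → +∞, i.e. lim_{x→+∞} u(x)·√x·e^{γx} exists and is a positive real number. -/

import Mathlib

open Real Filter Set MeasureTheory

/-- Modified Bessel function of the second kind of order 0. -/
noncomputable def K0 (r : ℝ) : ℝ := ∫ t in Ioi (0 : ℝ), Real.exp (-r * Real.cosh t)

/-- The on-axis (`y = 0`) travelling front profile. -/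
noncomputable def onAxisProfile (v x : ℝ) : ℝ :=
  (1 / (2 * π)) *
    ∫ ξ in Ioi x, K0 (|ξ| * Real.sqrt (1 + v ^ 2 / 4)) * Real.exp (-(v / 2) * ξ)

namespace Stmt19

/-- `|v|/2 < √(1+v²/4)` -/
lemma abs_half_lt (v : ℝ) : |v| / 2 < Real.sqrt (1 + v ^ 2 / 4) := by
  have h1 : |v| / 2 = Real.sqrt (v ^ 2 / 4) := by
    rw [show v ^ 2 / 4 = (|v| / 2) ^ 2 by rw [div_pow, sq_abs]; norm_num,
      Real.sqrt_sq (by positivity)]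
  rw [h1]
  exact Real.sqrt_lt_sqrt (by positivity) (by nlinarith)

lemma gamma_pos (v : ℝ) : 0 < Real.sqrt (1 + v ^ 2 / 4) + v / 2 := by
  have := abs_half_lt v
  have := neg_abs_le v
  linarith

lemma one_le_a (v : ℝ) : 1 ≤ Real.sqrt (1 + v ^ 2 / 4) := by
  rw [show (1:ℝ) + v ^ 2 / 4 = 1 + v ^ 2 / 4 from rfl]
  exact Real.one_le_sqrt.2 (by nlinarith)

/-- quadratic lower bound on cosh -/
lemma cosh_quad {t : ℝ} (ht : 0 ≤ t) : 1 + t ^ 2 / 2 ≤ Real.cosh t := by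
  have hid : Real.cosh t = 1 + 2 * Real.sinh (t / 2) ^ 2 := by
    rw [show t = 2 * (t / 2) by ring, Real.cosh_two_mul, Real.cosh_sq]
    ring_nf
  have hs : t / 2 ≤ Real.sinh (t / 2) := Real.self_le_sinh_iff.2 (by linarith)
  nlinarith [sq_nonneg (Real.sinh (t/2) - t/2), sq_nonneg (Real.sinh (t/2) + t/2)]

/-- the denominator bound -/
lemma denom_ge (v t : ℝ) :
    Real.sqrt (1 + v ^ 2 / 4) + v / 2 ≤ Real.sqrt (1 + v ^ 2 / 4) * Real.cosh t + v / 2 := by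
  have h1 : (0:ℝ) < Real.sqrt (1 + v ^ 2 / 4) := lt_of_lt_of_le one_pos (one_le_a v)
  nlinarith [Real.one_le_cosh t]

/-- exponential integral over Ioi -/
lemma exp_integral {c : ℝ} (hc : 0 < c) (x : ℝ) :
    ∫ ξ in Ioi x, Real.exp (-(c * ξ)) = Real.exp (-(c * x)) / c := by
  have := MeasureTheory.integral_comp_mul_left_Ioi (fun u => Real.exp (-u)) x hc
  simp only [smul_eq_mul, integral_exp_neg_Ioi] at this
  calc ∫ ξ in Ioi x, Real.exp (-(c * ξ)) = c⁻¹ * Real.exp (-(c * x)) := this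
    _ = Real.exp (-(c * x)) / c := by field_simp


lemma prod_integrable (v : ℝ) {x : ℝ} (hx : 0 < x) :
    Integrable
      (fun p : ℝ × ℝ =>
        Real.exp (-((Real.sqrt (1 + v ^ 2 / 4) * Real.cosh p.2 + v / 2) * p.1)))
      ((volume.restrict (Ioi x)).prod (volume.restrict (Ioi 0))) := by
  set a := Real.sqrt (1 + v ^ 2 / 4) with ha
  have ha1 : 1 ≤ a := one_le_a v
  have hg : 0 < a + v / 2 := gamma_pos v
  have hcont : Continuous (fun p : ℝ × ℝ =>
      Real.exp (-((a * Real.cosh p.2 + v / 2) * p.1))) := by fun_prop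
  refine Integrable.mono'
    (g := fun p : ℝ × ℝ => Real.exp (-(a + v / 2) * p.1) * Real.exp (-(x * a / 2) * p.2 ^ 2))
    ?_ hcont.aestronglyMeasurable ?_
  · exact (exp_neg_integrableOn_Ioi x hg).mul_prod
      ((integrable_exp_neg_mul_sq (by positivity : (0:ℝ) < x * a / 2)).restrict)
  · rw [Measure.prod_restrict]
    refine (ae_restrict_iff' (measurableSet_Ioi.prod measurableSet_Ioi)).2
      (ae_of_all _ fun p hp => ?_)
    obtain ⟨h1, h2⟩ := hp
    simp only [mem_Ioi] at h1 h2
    simp only [Real.norm_eq_abs, Real.abs_exp, ← Real.exp_add]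
    apply Real.exp_le_exp.2
    have hcq := cosh_quad h2.le
    nlinarith [mul_nonneg (mul_nonneg (by linarith : (0:ℝ) ≤ a)
        (by linarith : (0:ℝ) ≤ Real.cosh p.2 - 1 - p.2 ^ 2 / 2)) (by linarith : (0:ℝ) ≤ p.1),
      mul_nonneg (mul_nonneg (by linarith : (0:ℝ) ≤ a)
        (by positivity : (0:ℝ) ≤ p.2 ^ 2 / 2)) (by linarith : (0:ℝ) ≤ p.1 - x)]

lemma profile_formula (v : ℝ) {x : ℝ} (hx : 0 < x) :
    onAxisProfile v x = (1 / (2 * π)) *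
      ∫ t in Ioi (0 : ℝ),
        Real.exp (-((Real.sqrt (1 + v ^ 2 / 4) * Real.cosh t + v / 2) * x)) /
          (Real.sqrt (1 + v ^ 2 / 4) * Real.cosh t + v / 2) := by
  set a := Real.sqrt (1 + v ^ 2 / 4) with ha
  have ha1 : 1 ≤ a := one_le_a v
  have hg : 0 < a + v / 2 := gamma_pos v
  unfold onAxisProfile
  rw [← ha]
  congr 1
  have step1 : ∫ ξ in Ioi x, K0 (|ξ| * a) * Real.exp (-(v / 2) * ξ)
      = ∫ ξ in Ioi x, ∫ t in Ioi (0:ℝ),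
          Real.exp (-((a * Real.cosh t + v / 2) * ξ)) := by
    refine setIntegral_congr_fun measurableSet_Ioi fun ξ hξ => ?_
    have hξ0 : 0 < ξ := hx.trans hξ
    rw [abs_of_pos hξ0]
    unfold K0
    rw [← MeasureTheory.integral_mul_const]
    refine setIntegral_congr_fun measurableSet_Ioi fun t ht => ?_
    rw [← Real.exp_add]
    ring_nf
  rw [step1, MeasureTheory.integral_integral_swap (prod_integrable v hx)]
  refine setIntegral_congr_fun measurableSet_Ioi fun t ht => ?_
  have hc : 0 < a * Real.cosh t + v / 2 :=
    lt_of_lt_of_le hg (denom_ge v t)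
  exact exp_integral hc x


lemma sinh_div_tendsto : Tendsto (fun t : ℝ => Real.sinh t / t) (nhdsWithin 0 {(0:ℝ)}ᶜ) (nhds 1) := by
  have h := Real.hasDerivAt_sinh 0
  rw [hasDerivAt_iff_tendsto_slope] at h
  simp only [Real.cosh_zero] at h
  refine h.congr' (eventually_of_mem self_mem_nhdsWithin fun t ht => ?_)
  simp [slope_def_field, div_eq_mul_inv]

/-- the scaled-argument limit `x (cosh(s/√x) - 1) → s²/2`. -/
lemma scaled_cosh_tendsto {s : ℝ} (hs : 0 < s) :
    Tendsto (fun x : ℝ => x * (Real.cosh ((Real.sqrt x)⁻¹ * s) - 1)) atTop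
      (nhds (s ^ 2 / 2)) := by
  have hsq : Tendsto Real.sqrt atTop atTop :=
    tendsto_atTop_atTop_of_monotone (fun a b h => Real.sqrt_le_sqrt h)
      (fun b => ⟨b ^ 2, by rw [Real.sqrt_sq_eq_abs]; exact le_abs_self b⟩)
  have hu0 : Tendsto (fun x : ℝ => s / (2 * Real.sqrt x)) atTop (nhds 0) :=
    tendsto_const_nhds.div_atTop (Tendsto.const_mul_atTop two_pos hsq)
  have hune : ∀ᶠ x : ℝ in atTop, s / (2 * Real.sqrt x) ≠ 0 := by
    filter_upwards [eventually_gt_atTop 0] with x hx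
    have : 0 < Real.sqrt x := Real.sqrt_pos.2 hx
    positivity
  have hu : Tendsto (fun x : ℝ => s / (2 * Real.sqrt x)) atTop (nhdsWithin 0 {(0:ℝ)}ᶜ) := by
    rw [tendsto_nhdsWithin_iff]
    exact ⟨hu0, hune⟩
  have hmain : Tendsto
      (fun x : ℝ => s ^ 2 / 2 * (Real.sinh (s / (2 * Real.sqrt x)) / (s / (2 * Real.sqrt x))) ^ 2)
      atTop (nhds (s ^ 2 / 2)) := by
    have := ((sinh_div_tendsto.comp hu).pow 2).const_mul (s ^ 2 / 2)
    simpa using this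
  refine hmain.congr' ?_
  filter_upwards [eventually_gt_atTop 0] with x hx
  have hsx : 0 < Real.sqrt x := Real.sqrt_pos.2 hx
  have hx' : Real.sqrt x ^ 2 = x := Real.sq_sqrt hx.le
  have hid : Real.cosh ((Real.sqrt x)⁻¹ * s) = 1 + 2 * Real.sinh (s / (2 * Real.sqrt x)) ^ 2 := by
    rw [show (Real.sqrt x)⁻¹ * s = 2 * (s / (2 * Real.sqrt x)) by field_simp,
      Real.cosh_two_mul, Real.cosh_sq]
    ring
  rw [hid, div_pow, show (s / (2 * Real.sqrt x)) ^ 2 = s ^ 2 / (4 * x) by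
    rw [div_pow, mul_pow, hx']; norm_num]
  field_simp
  ring


lemma denom_pos (v : ℝ) (t : ℝ) :
    0 < Real.sqrt (1 + v ^ 2 / 4) * Real.cosh t + v / 2 :=
  lt_of_lt_of_le (gamma_pos v) (denom_ge v t)

lemma F_tendsto (v : ℝ) :
    Tendsto (fun x : ℝ => ∫ s in Ioi (0:ℝ),
      Real.exp (-(Real.sqrt (1 + v ^ 2 / 4) *
          (x * (Real.cosh ((Real.sqrt x)⁻¹ * s) - 1)))) /
        (Real.sqrt (1 + v ^ 2 / 4) * Real.cosh ((Real.sqrt x)⁻¹ * s) + v / 2))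
      atTop
      (nhds (∫ s in Ioi (0:ℝ),
        Real.exp (-(Real.sqrt (1 + v ^ 2 / 4) / 2 * s ^ 2)) /
          (Real.sqrt (1 + v ^ 2 / 4) + v / 2))) := by
  set a := Real.sqrt (1 + v ^ 2 / 4) with ha
  have ha1 : 1 ≤ a := one_le_a v
  have ha0 : (0:ℝ) < a := lt_of_lt_of_le one_pos ha1
  have hg : 0 < a + v / 2 := gamma_pos v
  refine tendsto_integral_filter_of_dominated_convergence
    (bound := fun s => Real.exp (-(a / 2 * s ^ 2)) * (a + v / 2)⁻¹) ?_ ?_ ?_ ?_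
  · refine Eventually.of_forall fun x => Continuous.aestronglyMeasurable ?_
    exact (by fun_prop : Continuous fun s : ℝ =>
        Real.exp (-(a * (x * (Real.cosh ((Real.sqrt x)⁻¹ * s) - 1))))).div
      (by fun_prop) (fun s => (denom_pos v _).ne')
  · filter_upwards [eventually_gt_atTop (0:ℝ)] with x hx
    refine (ae_restrict_iff' measurableSet_Ioi).2 (ae_of_all _ fun s hs => ?_)
    rw [mem_Ioi] at hs
    have hsx : 0 < Real.sqrt x := Real.sqrt_pos.2 hx
    set u := (Real.sqrt x)⁻¹ * s with hu
    have hu0 : 0 ≤ u := by positivity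
    have hu2 : u ^ 2 = s ^ 2 / x := by
      rw [hu, mul_pow, inv_pow, Real.sq_sqrt hx.le]
      ring
    have h5 : s ^ 2 / (2 * x) ≤ Real.cosh u - 1 := by
      have := cosh_quad hu0
      rw [hu2] at this
      have hxne : x ≠ 0 := hx.ne'
      rw [div_mul_eq_div_div_swap]
      linarith [this]
    have h6 : s ^ 2 / 2 ≤ x * (Real.cosh u - 1) := by
      have := mul_le_mul_of_nonneg_left h5 hx.le
      rwa [show x * (s ^ 2 / (2 * x)) = s ^ 2 / 2 by field_simp] at this
    have hexp : Real.exp (-(a * (x * (Real.cosh u - 1)))) ≤ Real.exp (-(a / 2 * s ^ 2)) := by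
      apply Real.exp_le_exp.2
      nlinarith [mul_le_mul_of_nonneg_left h6 ha0.le]
    have hD := denom_pos v u
    rw [← ha] at hD
    rw [Real.norm_eq_abs, abs_of_pos (div_pos (Real.exp_pos _) hD), ← div_eq_mul_inv]
    have hden : a + v / 2 ≤ a * Real.cosh u + v / 2 := by rw [ha]; exact denom_ge v u
    exact div_le_div₀ (Real.exp_pos _).le hexp hg hden
  · have hInt : Integrable (fun s : ℝ => Real.exp (-(a / 2 * s ^ 2))) := by
      have h0 := integrable_exp_neg_mul_sq (by positivity : (0:ℝ) < a / 2)
      simpa [neg_mul] using h0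
    exact hInt.restrict.mul_const _
  · refine (ae_restrict_iff' measurableSet_Ioi).2 (ae_of_all _ fun s hs => ?_)
    rw [mem_Ioi] at hs
    have hnum : Tendsto (fun x : ℝ =>
        Real.exp (-(a * (x * (Real.cosh ((Real.sqrt x)⁻¹ * s) - 1))))) atTop
        (nhds (Real.exp (-(a / 2 * s ^ 2)))) := by
      have h1 := ((scaled_cosh_tendsto hs).const_mul a).neg
      have := (Real.continuous_exp.tendsto _).comp h1
      simpa [Function.comp_def, show -(a * (s ^ 2 / 2)) = -(a / 2 * s ^ 2) by ring] using this
    have hden : Tendsto (fun x : ℝ =>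
        a * Real.cosh ((Real.sqrt x)⁻¹ * s) + v / 2) atTop (nhds (a + v / 2)) := by
      have hsq : Tendsto Real.sqrt atTop atTop :=
        tendsto_atTop_atTop_of_monotone (fun p q h => Real.sqrt_le_sqrt h)
          (fun b => ⟨b ^ 2, by rw [Real.sqrt_sq_eq_abs]; exact le_abs_self b⟩)
      have hu0 : Tendsto (fun x : ℝ => (Real.sqrt x)⁻¹ * s) atTop (nhds 0) := by
        have := (hsq.inv_tendsto_atTop).mul_const s
        simpa using this
      have hc := (Real.continuous_cosh.tendsto 0).comp hu0
      have := (hc.const_mul a).add_const (v / 2)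
      simpa [Function.comp] using this
    exact hnum.div hden hg.ne'

lemma profile_identity (v : ℝ) {x : ℝ} (hx : 0 < x) :
    onAxisProfile v x * Real.sqrt x *
        Real.exp ((Real.sqrt (1 + v ^ 2 / 4) + v / 2) * x)
      = (1 / (2 * π)) * ∫ s in Ioi (0:ℝ),
          Real.exp (-(Real.sqrt (1 + v ^ 2 / 4) *
              (x * (Real.cosh ((Real.sqrt x)⁻¹ * s) - 1)))) /
            (Real.sqrt (1 + v ^ 2 / 4) * Real.cosh ((Real.sqrt x)⁻¹ * s) + v / 2) := by
  set a := Real.sqrt (1 + v ^ 2 / 4) with ha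
  rw [profile_formula v hx]
  have hb : 0 < (Real.sqrt x)⁻¹ := inv_pos.2 (Real.sqrt_pos.2 hx)
  have hcv := MeasureTheory.integral_comp_mul_left_Ioi
    (fun t => Real.exp (-(a * (x * (Real.cosh t - 1)))) / (a * Real.cosh t + v / 2)) 0 hb
  simp only [mul_zero, inv_inv, smul_eq_mul] at hcv
  rw [← ha, hcv]
  have key : (∫ t in Ioi (0:ℝ),
        Real.exp (-((a * Real.cosh t + v / 2) * x)) / (a * Real.cosh t + v / 2)) *
        Real.exp ((a + v / 2) * x)
      = ∫ t in Ioi (0:ℝ),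
          Real.exp (-(a * (x * (Real.cosh t - 1)))) / (a * Real.cosh t + v / 2) := by
    rw [← MeasureTheory.integral_mul_const]
    refine setIntegral_congr_fun measurableSet_Ioi fun t ht => ?_
    rw [div_mul_eq_mul_div, ← Real.exp_add]
    congr 2
    ring
  rw [← key]
  ring

end Stmt19

/-- the leading front decays like `C e^{-γx}/√x` with
`γ = √(1 + v²/4) + v/2 > 0`: precisely, `u(x) √x e^{γx}` tends to a positive constant. -/
theorem stmt_19 (v : ℝ) :
    0 < Real.sqrt (1 + v ^ 2 / 4) + v / 2 ∧
    ∃ C : ℝ, 0 < C ∧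
      Tendsto
        (fun x : ℝ =>
          onAxisProfile v x * Real.sqrt x *
            Real.exp ((Real.sqrt (1 + v ^ 2 / 4) + v / 2) * x))
        atTop (nhds C) := by
  refine ⟨Stmt19.gamma_pos v, (1 / (2 * π)) * ∫ s in Ioi (0:ℝ),
      Real.exp (-(Real.sqrt (1 + v ^ 2 / 4) / 2 * s ^ 2)) /
        (Real.sqrt (1 + v ^ 2 / 4) + v / 2), ?_, ?_⟩
  · set a := Real.sqrt (1 + v ^ 2 / 4) with ha
    have ha0 : (0:ℝ) < a := lt_of_lt_of_le one_pos (Stmt19.one_le_a v)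
    have hg : 0 < a + v / 2 := Stmt19.gamma_pos v
    have : ∫ s in Ioi (0:ℝ), Real.exp (-(a / 2 * s ^ 2)) / (a + v / 2)
        = (∫ s in Ioi (0:ℝ), Real.exp (-(a / 2) * s ^ 2)) / (a + v / 2) := by
      rw [← MeasureTheory.integral_div]
      refine setIntegral_congr_fun measurableSet_Ioi fun t ht => ?_
      rw [neg_mul]
    rw [this, integral_gaussian_Ioi]
    have : (0:ℝ) < Real.sqrt (π / (a / 2)) := Real.sqrt_pos.2 (by positivity)
    have hπ : (0:ℝ) < π := Real.pi_pos
    positivity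
  · have h := (Stmt19.F_tendsto v).const_mul (1 / (2 * π))
    refine h.congr' ?_
    filter_upwards [eventually_gt_atTop (0:ℝ)] with x hx
    exact (Stmt19.profile_identity v hx).symm
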